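/- Let p be a prime, k ≥ 0 and l ≥ 1, and give A_{k+1,l} the A_{k,l}-algebra structure determined by sending the class of X in A_{k,l} to the class of X^p in A_{k+1,l}. Let N : A_{k+1,l} → A_{k,l} denote the norm map, defined as the determinant of the A_{k,l}-linear multiplication operator. Then N is additive modulo p: for all a, b ∈ A_{k+1,l}, N(a + b) − N(a) − N(b) ∈ p·A_{k,l}. -/

import Mathlib

open Polynomial
set_option maxHeartbeats 1000000

noncomputable section

lemma repr_map_of_basis {R S R' S' : Type*} [CommRing R] [CommRing S] [CommRing R'] [CommRing S']
    [Algebra R S] [Algebra R' S'] {ι : Type*} [Fintype ι] [DecidableEq ι]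
    (b : Module.Basis ι R S) (b' : Module.Basis ι R' S') (σ : R →+* R') (τ : S →+* S')
    (hcomp : ∀ r, τ (algebraMap R S r) = algebraMap R' S' (σ r))
    (hb : ∀ i, τ (b i) = b' i) (z : S) (i : ι) :
    b'.repr (τ z) i = σ (b.repr z i) := by
  have hz : τ z = ∑ m, σ (b.repr z m) • b' m := by
    conv_lhs => rw [← b.sum_repr z]
    rw [map_sum]
    refine Finset.sum_congr rfl fun m _ => ?_
    rw [Algebra.smul_def, map_mul, hcomp, hb, ← Algebra.smul_def]
  rw [hz, map_sum]
  simp [Module.Basis.repr_self, Finsupp.single_apply]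

lemma norm_map_of_basis {R S R' S' : Type*} [CommRing R] [CommRing S] [CommRing R'] [CommRing S']
    [Algebra R S] [Algebra R' S'] {ι : Type*} [Fintype ι] [DecidableEq ι]
    (b : Module.Basis ι R S) (b' : Module.Basis ι R' S') (σ : R →+* R') (τ : S →+* S')
    (hcomp : ∀ r, τ (algebraMap R S r) = algebraMap R' S' (σ r))
    (hb : ∀ i, τ (b i) = b' i) (a : S) :
    Algebra.norm R' (τ a) = σ (Algebra.norm R a) := by
  rw [Algebra.norm_eq_matrix_det b, Algebra.norm_eq_matrix_det b', RingHom.map_det]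
  congr 1
  ext i j
  rw [RingHom.mapMatrix_apply]
  show Algebra.leftMulMatrix b' (τ a) i j = σ (Algebra.leftMulMatrix b a i j)
  rw [Algebra.leftMulMatrix_eq_repr_mul, Algebra.leftMulMatrix_eq_repr_mul,
    ← hb j, ← map_mul, repr_map_of_basis b b' σ τ hcomp hb]

lemma root_pow_eq {R : Type*} [CommRing R] (p : ℕ) (β : R) :
    (AdjoinRoot.root (X ^ p - C β)) ^ p = algebraMap R (AdjoinRoot (X ^ p - C β)) β := by
  have h0 : AdjoinRoot.mk (X ^ p - C β) (X ^ p - C β) = 0 := AdjoinRoot.mk_self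
  rw [map_sub, map_pow, AdjoinRoot.mk_X, AdjoinRoot.mk_C, sub_eq_zero] at h0
  rw [h0, AdjoinRoot.algebraMap_eq]

lemma norm_formula (p : ℕ) (hp : p.Prime) {R : Type*} [CommRing R] [IsDomain R] [CharP R p]
    (β : R) (e : Fin p → R) :
    Algebra.norm R (∑ i : Fin p, algebraMap R (AdjoinRoot (X ^ p - C β)) (e i) *
      AdjoinRoot.root (X ^ p - C β) ^ (i : ℕ)) = ∑ i : Fin p, e i ^ p * β ^ (i : ℕ) := by
  haveI : Fact p.Prime := ⟨hp⟩
  have hmon : (X ^ p - C β).Monic := monic_X_pow_sub_C β hp.ne_zero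
  set q : R[X] := X ^ p - C β with hq
  set D := AdjoinRoot q with hD
  set x := AdjoinRoot.root q with hx
  have hxp : x ^ p = algebraMap R D β := root_pow_eq p β
  set pb := AdjoinRoot.powerBasis' hmon with hpb
  have hdim : pb.dim = p := by
    rw [hpb, AdjoinRoot.powerBasis'_dim, hq, natDegree_X_pow_sub_C]
  have hinj : Function.Injective (algebraMap R D) := by
    intro r s hrs
    have h1 : ∀ t : R, algebraMap R D t = t • pb.basis ⟨0, by rw [hdim]; exact hp.pos⟩ := by
      intro t
      rw [PowerBasis.basis_eq_pow, pow_zero, Algebra.smul_def, mul_one]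
    rw [h1, h1] at hrs
    have := sub_eq_zero.mpr hrs
    rw [← sub_smul] at this
    have h2 := pb.basis.linearIndependent
    rw [linearIndependent_iff'] at h2
    have := h2 Finset.univ (fun j => if j = ⟨0, by rw [hdim]; exact hp.pos⟩ then r - s else 0) ?_
      ⟨0, by rw [hdim]; exact hp.pos⟩ (Finset.mem_univ _)
    · simpa using sub_eq_zero.mp (by simpa using this)
    · rw [Finset.sum_eq_single (⟨0, by rw [hdim]; exact hp.pos⟩ : Fin pb.dim)] <;> simp_all
  haveI : CharP D p := charP_of_injective_ringHom hinj p
  haveI : ExpChar D p := ExpChar.prime hp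
  set a : D := ∑ i : Fin p, algebraMap R D (e i) * x ^ (i : ℕ) with ha
  have hap : a ^ p = algebraMap R D (∑ i : Fin p, e i ^ p * β ^ (i : ℕ)) := by
    rw [ha, sum_pow_char, map_sum]
    refine Finset.sum_congr rfl fun i _ => ?_
    rw [mul_pow, ← map_pow, ← pow_mul, mul_comm (i : ℕ) p, pow_mul, hxp, ← map_pow, ← map_mul]
  have hnorm_pow : (Algebra.norm R a) ^ p = (∑ i : Fin p, e i ^ p * β ^ (i : ℕ)) ^ p := by
    rw [← map_pow, hap]
    rw [Algebra.norm_algebraMap_of_basis pb.basis]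
    simp [hdim]
  exact frobenius_inj R p hnorm_pow

lemma main_aux (p : ℕ) (hp : p.Prime) (f g : Polynomial ℤ) (hfm : f.Monic) (hgm : g.Monic)
    (hdeg : g.natDegree = p * f.natDegree)
    (φ : AdjoinRoot f →+* AdjoinRoot g)
    (hφ : φ (AdjoinRoot.root f) = (AdjoinRoot.root g) ^ p)
    (a b : AdjoinRoot g) :
    (p : AdjoinRoot f) ∣
      (@Algebra.norm (AdjoinRoot f) (AdjoinRoot g) _ _ φ.toAlgebra (a + b)
        - @Algebra.norm (AdjoinRoot f) (AdjoinRoot g) _ _ φ.toAlgebra a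
        - @Algebra.norm (AdjoinRoot f) (AdjoinRoot g) _ _ φ.toAlgebra b) := by
  haveI : Fact p.Prime := ⟨hp⟩
  letI : Algebra (AdjoinRoot f) (AdjoinRoot g) := φ.toAlgebra
  have halg : algebraMap (AdjoinRoot f) (AdjoinRoot g) = φ := rfl
  set x := AdjoinRoot.root g with hx
  set β := AdjoinRoot.root f with hβ
  set pbB := AdjoinRoot.powerBasis' hfm with hpbB
  set pbC := AdjoinRoot.powerBasis' hgm with hpbC
  have hxp : x ^ p = algebraMap (AdjoinRoot f) (AdjoinRoot g) β := by
    rw [halg, hφ]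
  have hdimB : pbB.dim = f.natDegree := AdjoinRoot.powerBasis'_dim hfm
  have hdimC : pbC.dim = g.natDegree := AdjoinRoot.powerBasis'_dim hgm
  -- the index injection
  have hlt : ∀ (i : Fin p) (j : Fin pbB.dim), p * (j : ℕ) + (i : ℕ) < pbC.dim := by
    intro i j
    have h1 : (j : ℕ) + 1 ≤ f.natDegree := by rw [← hdimB]; exact j.is_lt
    have h2 : p * ((j : ℕ) + 1) ≤ p * f.natDegree := Nat.mul_le_mul_left p h1
    have h3 : p * ((j : ℕ) + 1) = p * (j : ℕ) + p := by ring
    have h4 : pbC.dim = p * f.natDegree := by rw [hdimC, hdeg]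
    have h5 : (i : ℕ) < p := i.is_lt
    omega
  set ψ : Fin p × Fin pbB.dim → Fin pbC.dim := fun ij => ⟨p * (ij.2 : ℕ) + (ij.1 : ℕ), hlt _ _⟩
    with hψ
  have hψinj : Function.Injective ψ := by
    rintro ⟨i, j⟩ ⟨i', j'⟩ h
    have hval : p * (j : ℕ) + (i : ℕ) = p * (j' : ℕ) + (i' : ℕ) := congrArg Fin.val h
    have e1 : ((i : ℕ) + p * (j : ℕ)) % p = (i : ℕ) % p := Nat.add_mul_mod_self_left _ _ _
    have e1' : ((i' : ℕ) + p * (j' : ℕ)) % p = (i' : ℕ) % p := Nat.add_mul_mod_self_left _ _ _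
    have e2 : ((i : ℕ) + p * (j : ℕ)) / p = (i : ℕ) / p + (j : ℕ) :=
      Nat.add_mul_div_left _ _ hp.pos
    have e2' : ((i' : ℕ) + p * (j' : ℕ)) / p = (i' : ℕ) / p + (j' : ℕ) :=
      Nat.add_mul_div_left _ _ hp.pos
    have hi : (i : ℕ) = (i' : ℕ) := by
      have := congrArg (· % p) (by omega : (i : ℕ) + p * (j : ℕ) = (i' : ℕ) + p * (j' : ℕ))
      rw [e1, e1'] at this
      rwa [Nat.mod_eq_of_lt i.is_lt, Nat.mod_eq_of_lt i'.is_lt] at this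
    have hj : (j : ℕ) = (j' : ℕ) := by
      have := congrArg (· / p) (by omega : (i : ℕ) + p * (j : ℕ) = (i' : ℕ) + p * (j' : ℕ))
      rw [e2, e2'] at this
      rw [Nat.div_eq_of_lt i.is_lt, Nat.div_eq_of_lt i'.is_lt] at this
      omega
    exact Prod.ext (Fin.ext hi) (Fin.ext hj)
  -- linear independence of x^i over AdjoinRoot f
  have hLI : LinearIndependent (AdjoinRoot f) (fun i : Fin p => x ^ (i : ℕ)) := by
    rw [Fintype.linearIndependent_iff]
    intro c hc
    set n : Fin p → Fin pbB.dim → ℤ := fun i j => pbB.basis.repr (c i) j with hn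
    have hci : ∀ i, c i = ∑ j, n i j • pbB.basis j := fun i => (pbB.basis.sum_repr (c i)).symm
    have hφci : ∀ i, algebraMap (AdjoinRoot f) (AdjoinRoot g) (c i)
        = ∑ j, n i j • x ^ (p * (j : ℕ)) := by
      intro i
      rw [hci i, map_sum]
      refine Finset.sum_congr rfl fun j _ => ?_
      rw [map_zsmul, PowerBasis.basis_eq_pow, map_pow]
      rw [show (algebraMap (AdjoinRoot f) (AdjoinRoot g)) pbB.gen = x ^ p by rw [halg]; exact hφ]
      rw [← pow_mul]
    have hsum : ∑ ij : Fin p × Fin pbB.dim, n ij.1 ij.2 • pbC.basis (ψ ij) = 0 := by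
      have : ∀ ij : Fin p × Fin pbB.dim,
          n ij.1 ij.2 • pbC.basis (ψ ij) = n ij.1 ij.2 • (x ^ (p * (ij.2 : ℕ)) * x ^ (ij.1 : ℕ)) := by
        intro ij
        rw [PowerBasis.basis_eq_pow, hψ]
        congr 1
        show pbC.gen ^ (p * (ij.2 : ℕ) + (ij.1 : ℕ)) = _
        rw [pow_add]
        rfl
      rw [Finset.sum_congr rfl (fun ij _ => this ij)]
      rw [Fintype.sum_prod_type]
      have : ∀ i : Fin p, ∑ j : Fin pbB.dim, n i j • (x ^ (p * (j : ℕ)) * x ^ (i : ℕ))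
          = c i • x ^ (i : ℕ) := by
        intro i
        rw [Algebra.smul_def, hφci i, Finset.sum_mul]
        refine Finset.sum_congr rfl fun j _ => ?_
        rw [smul_mul_assoc]
      rw [Finset.sum_congr rfl (fun i _ => this i), hc]
    have hLIψ : LinearIndependent ℤ (fun ij : Fin p × Fin pbB.dim => pbC.basis (ψ ij)) :=
      pbC.basis.linearIndependent.comp ψ hψinj
    have hzero := Fintype.linearIndependent_iff.mp hLIψ (fun ij => n ij.1 ij.2) hsum
    intro i
    have : pbB.basis.repr (c i) = 0 := by
      ext j
      exact hzero (i, j)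
    have := congrArg pbB.basis.repr.symm this
    rwa [LinearEquiv.symm_apply_apply, map_zero] at this
  -- spanning
  have hSP : ⊤ ≤ Submodule.span (AdjoinRoot f) (Set.range fun i : Fin p => x ^ (i : ℕ)) := by
    intro z _
    rw [← pbC.basis.sum_repr z]
    refine Submodule.sum_mem _ fun m _ => ?_
    rw [← Int.cast_smul_eq_zsmul (AdjoinRoot f)]
    refine Submodule.smul_mem _ _ ?_
    have hbm : pbC.basis m = algebraMap (AdjoinRoot f) (AdjoinRoot g) (β ^ ((m : ℕ) / p))
        * x ^ ((m : ℕ) % p) := by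
      rw [PowerBasis.basis_eq_pow]
      show pbC.gen ^ (m : ℕ) = _
      have : pbC.gen = x := rfl
      rw [this]
      calc x ^ (m : ℕ) = x ^ (p * ((m : ℕ) / p) + (m : ℕ) % p) := by rw [Nat.div_add_mod]
        _ = (x ^ p) ^ ((m : ℕ) / p) * x ^ ((m : ℕ) % p) := by rw [pow_add, pow_mul]
        _ = _ := by rw [hxp, ← map_pow]
    rw [hbm, ← Algebra.smul_def]
    exact Submodule.smul_mem _ _ (Submodule.subset_span
      ⟨⟨(m : ℕ) % p, Nat.mod_lt _ hp.pos⟩, rfl⟩)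
  set bC : Module.Basis (Fin p) (AdjoinRoot f) (AdjoinRoot g) := Module.Basis.mk hLI hSP with hbCdef
  have hbC : ∀ i : Fin p, bC i = x ^ (i : ℕ) := fun i => Module.Basis.mk_apply hLI hSP i
  -- universal rings
  set R₁ := MvPolynomial ((Fin p ⊕ Fin p) ⊕ Unit) ℤ with hR₁
  set βu : R₁ := MvPolynomial.X (Sum.inr ()) with hβu
  have hq₁ : (X ^ p - C βu : R₁[X]).Monic := monic_X_pow_sub_C _ hp.ne_zero
  set D₁ := AdjoinRoot (X ^ p - C βu : R₁[X]) with hD₁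
  set x₁ := AdjoinRoot.root (X ^ p - C βu : R₁[X]) with hx₁
  set pb₁ := AdjoinRoot.powerBasis' hq₁ with hpb₁
  have hdim₁ : pb₁.dim = p := by
    rw [hpb₁, AdjoinRoot.powerBasis'_dim, natDegree_X_pow_sub_C]
  set b₁ : Module.Basis (Fin p) R₁ D₁ := pb₁.basis.reindex (finCongr hdim₁) with hb₁def
  have hb₁ : ∀ i : Fin p, b₁ i = x₁ ^ (i : ℕ) := by
    intro i
    rw [hb₁def, Module.Basis.reindex_apply, PowerBasis.basis_eq_pow]
    rfl
  -- the evaluation maps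
  set v : (Fin p ⊕ Fin p) ⊕ Unit → AdjoinRoot f := fun s =>
    Sum.rec (fun s' => Sum.rec (fun i => bC.repr a i) (fun i => bC.repr b i) s') (fun _ => β) s
    with hv
  set σ : R₁ →+* AdjoinRoot f := (MvPolynomial.aeval v).toRingHom with hσ
  have hσX : ∀ s, σ (MvPolynomial.X s) = v s := fun s => MvPolynomial.aeval_X v s
  have hτ0 : Polynomial.eval₂ (φ.comp σ) x (X ^ p - C βu) = 0 := by
    rw [eval₂_sub, eval₂_X_pow, eval₂_C, RingHom.comp_apply, hσX, sub_eq_zero]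
    show x ^ p = φ β
    rw [hφ]
  set τ : D₁ →+* AdjoinRoot g := AdjoinRoot.lift (φ.comp σ) x hτ0 with hτdef
  have hτroot : τ x₁ = x := AdjoinRoot.lift_root hτ0
  have hτcomp : ∀ r, τ (algebraMap R₁ D₁ r) = algebraMap (AdjoinRoot f) (AdjoinRoot g) (σ r) := by
    intro r
    rw [AdjoinRoot.algebraMap_eq, AdjoinRoot.lift_of, RingHom.comp_apply, halg]
  have hτb : ∀ i : Fin p, τ (b₁ i) = bC i := by
    intro i
    rw [hb₁ i, map_pow, hτroot, hbC]
  -- universal elements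
  set au : D₁ := ∑ i : Fin p, algebraMap R₁ D₁ (MvPolynomial.X (Sum.inl (Sum.inl i))) * x₁ ^ (i : ℕ)
    with hau
  set bu : D₁ := ∑ i : Fin p, algebraMap R₁ D₁ (MvPolynomial.X (Sum.inl (Sum.inr i))) * x₁ ^ (i : ℕ)
    with hbu
  have hτau : τ au = a := by
    rw [hau, map_sum]
    have : ∀ i : Fin p, τ (algebraMap R₁ D₁ (MvPolynomial.X (Sum.inl (Sum.inl i))) * x₁ ^ (i : ℕ))
        = bC.repr a i • bC i := by
      intro i
      rw [map_mul, hτcomp, hσX, map_pow, hτroot, Algebra.smul_def, ← hbC]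
    rw [Finset.sum_congr rfl (fun i _ => this i)]
    exact bC.sum_repr a
  have hτbu : τ bu = b := by
    rw [hbu, map_sum]
    have : ∀ i : Fin p, τ (algebraMap R₁ D₁ (MvPolynomial.X (Sum.inl (Sum.inr i))) * x₁ ^ (i : ℕ))
        = bC.repr b i • bC i := by
      intro i
      rw [map_mul, hτcomp, hσX, map_pow, hτroot, Algebra.smul_def, ← hbC]
    rw [Finset.sum_congr rfl (fun i _ => this i)]
    exact bC.sum_repr b
  have hnorm : ∀ z : D₁, Algebra.norm (AdjoinRoot f) (τ z) = σ (Algebra.norm R₁ z) :=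
    norm_map_of_basis b₁ bC σ τ hτcomp hτb
  have hgoal_eq : Algebra.norm (AdjoinRoot f) (a + b) - Algebra.norm (AdjoinRoot f) a
      - Algebra.norm (AdjoinRoot f) b
      = σ (Algebra.norm R₁ (au + bu) - Algebra.norm R₁ au - Algebra.norm R₁ bu) := by
    rw [← hτau, ← hτbu, ← map_add τ, hnorm, hnorm, hnorm, map_sub σ, map_sub σ]
  rw [hgoal_eq]
  -- divisibility in the universal ring
  suffices hU : (p : R₁) ∣ (Algebra.norm R₁ (au + bu) - Algebra.norm R₁ au - Algebra.norm R₁ bu) by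
    obtain ⟨w, hw⟩ := hU
    exact ⟨σ w, by rw [hw, map_mul, map_natCast]⟩
  -- pass to ZMod p coefficients
  set R₀ := MvPolynomial ((Fin p ⊕ Fin p) ⊕ Unit) (ZMod p) with hR₀
  haveI : CharP R₀ p := charP_of_injective_ringHom
    (MvPolynomial.C_injective ((Fin p ⊕ Fin p) ⊕ Unit) (ZMod p)) p
  set π : R₁ →+* R₀ := MvPolynomial.map (Int.castRingHom (ZMod p)) with hπ
  set Δ := Algebra.norm R₁ (au + bu) - Algebra.norm R₁ au - Algebra.norm R₁ bu with hΔ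
  suffices hπΔ : π Δ = 0 by
    have hcoeff : ∀ m, (p : ℤ) ∣ MvPolynomial.coeff m Δ := by
      intro m
      have := congrArg (MvPolynomial.coeff m) hπΔ
      rw [hπ, MvPolynomial.coeff_map] at this
      simpa [ZMod.intCast_zmod_eq_zero_iff_dvd] using this
    have hCdvd : (MvPolynomial.C (p : ℤ) : R₁) ∣ Δ :=
      (MvPolynomial.C_dvd_iff_dvd_coeff _ _).mpr hcoeff
    have : (MvPolynomial.C ((p : ℕ) : ℤ) : R₁) = (p : R₁) := by
      push_cast
      simp
    rwa [← this]
  -- now compute in char p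
  set β₀ : R₀ := MvPolynomial.X (Sum.inr ()) with hβ₀
  have hq₀ : (X ^ p - C β₀ : R₀[X]).Monic := monic_X_pow_sub_C _ hp.ne_zero
  set D₀ := AdjoinRoot (X ^ p - C β₀ : R₀[X]) with hD₀
  set x₀ := AdjoinRoot.root (X ^ p - C β₀ : R₀[X]) with hx₀
  set pb₀ := AdjoinRoot.powerBasis' hq₀ with hpb₀
  have hdim₀ : pb₀.dim = p := by
    rw [hpb₀, AdjoinRoot.powerBasis'_dim, natDegree_X_pow_sub_C]
  set b₀ : Module.Basis (Fin p) R₀ D₀ := pb₀.basis.reindex (finCongr hdim₀) with hb₀def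
  have hb₀ : ∀ i : Fin p, b₀ i = x₀ ^ (i : ℕ) := by
    intro i
    rw [hb₀def, Module.Basis.reindex_apply, PowerBasis.basis_eq_pow]
    rfl
  have hx₀p : x₀ ^ p = algebraMap R₀ D₀ β₀ := root_pow_eq p β₀
  have hτ₀0 : Polynomial.eval₂ ((algebraMap R₀ D₀).comp π) x₀ (X ^ p - C βu) = 0 := by
    rw [eval₂_sub, eval₂_X_pow, eval₂_C, RingHom.comp_apply, sub_eq_zero, hx₀p]
    congr 1
    rw [hπ, hβu, MvPolynomial.map_X]
  set τ₀ : D₁ →+* D₀ := AdjoinRoot.lift ((algebraMap R₀ D₀).comp π) x₀ hτ₀0 with hτ₀def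
  have hτ₀root : τ₀ x₁ = x₀ := AdjoinRoot.lift_root hτ₀0
  have hτ₀comp : ∀ r, τ₀ (algebraMap R₁ D₁ r) = algebraMap R₀ D₀ (π r) := by
    intro r
    rw [AdjoinRoot.algebraMap_eq, AdjoinRoot.lift_of, RingHom.comp_apply]
  have hτ₀b : ∀ i : Fin p, τ₀ (b₁ i) = b₀ i := by
    intro i
    rw [hb₁ i, map_pow, hτ₀root, hb₀]
  have hnorm₀ : ∀ z : D₁, Algebra.norm R₀ (τ₀ z) = π (Algebra.norm R₁ z) :=
    norm_map_of_basis b₁ b₀ π τ₀ hτ₀comp hτ₀b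
  have hτ₀au : τ₀ au = ∑ i : Fin p,
      algebraMap R₀ D₀ (MvPolynomial.X (Sum.inl (Sum.inl i))) * x₀ ^ (i : ℕ) := by
    rw [hau, map_sum]
    refine Finset.sum_congr rfl fun i _ => ?_
    rw [map_mul, hτ₀comp, map_pow, hτ₀root, hπ, MvPolynomial.map_X]
  have hτ₀bu : τ₀ bu = ∑ i : Fin p,
      algebraMap R₀ D₀ (MvPolynomial.X (Sum.inl (Sum.inr i))) * x₀ ^ (i : ℕ) := by
    rw [hbu, map_sum]
    refine Finset.sum_congr rfl fun i _ => ?_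
    rw [map_mul, hτ₀comp, map_pow, hτ₀root, hπ, MvPolynomial.map_X]
  have hτ₀sum : τ₀ (au + bu) = ∑ i : Fin p,
      algebraMap R₀ D₀ (MvPolynomial.X (Sum.inl (Sum.inl i)) + MvPolynomial.X (Sum.inl (Sum.inr i)))
        * x₀ ^ (i : ℕ) := by
    rw [map_add, hτ₀au, hτ₀bu, ← Finset.sum_add_distrib]
    refine Finset.sum_congr rfl fun i _ => ?_
    rw [map_add, add_mul]
  rw [hΔ, map_sub, map_sub, ← hnorm₀, ← hnorm₀, ← hnorm₀, hτ₀sum, hτ₀au, hτ₀bu,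
    norm_formula p hp, norm_formula p hp, norm_formula p hp]
  rw [← Finset.sum_sub_distrib, ← Finset.sum_sub_distrib]
  refine Finset.sum_eq_zero fun i _ => ?_
  rw [add_pow_char]
  ring

/-- Let `p` be a prime, `k ≥ 0`, `l ≥ 1`, let
`f = f_{k,l} = (X^{p^{k+l}} - 1)/(X^{p^k} - 1)` and `g = f_{k+1,l}` in `ℤ[X]`, and put
`A_{k,l} = ℤ[X]/(f)`, `A_{k+1,l} = ℤ[X]/(g)`. Give `A_{k+1,l}` the `A_{k,l}`-algebra
structure determined by sending the class of `X` to the class of `X^p`, and let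
`N : A_{k+1,l} → A_{k,l}` be the norm, i.e. the determinant of the multiplication
operator. Then `N` is additive modulo `p`: `N(a+b) - N(a) - N(b) ∈ p·A_{k,l}` for all
`a, b`. -/
theorem statement14 (p : ℕ) (hp : p.Prime) (k l : ℕ) (hl : 1 ≤ l)
    (f g : Polynomial ℤ)
    (hf : f * (Polynomial.X ^ (p ^ k) - 1) = Polynomial.X ^ (p ^ (k + l)) - 1)
    (hg : g * (Polynomial.X ^ (p ^ (k + 1)) - 1) = Polynomial.X ^ (p ^ (k + 1 + l)) - 1)
    (φ : (Polynomial ℤ ⧸ Ideal.span {f}) →+* (Polynomial ℤ ⧸ Ideal.span {g}))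
    (hφ : φ (Ideal.Quotient.mk (Ideal.span {f}) Polynomial.X) =
      Ideal.Quotient.mk (Ideal.span {g}) (Polynomial.X ^ p)) :
    ∀ a b : Polynomial ℤ ⧸ Ideal.span {g},
      (p : Polynomial ℤ ⧸ Ideal.span {f}) ∣
        (@Algebra.norm (Polynomial ℤ ⧸ Ideal.span {f}) (Polynomial ℤ ⧸ Ideal.span {g}) _ _
            φ.toAlgebra (a + b)
          - @Algebra.norm (Polynomial ℤ ⧸ Ideal.span {f}) (Polynomial ℤ ⧸ Ideal.span {g}) _ _
            φ.toAlgebra a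
          - @Algebra.norm (Polynomial ℤ ⧸ Ideal.span {f}) (Polynomial ℤ ⧸ Ideal.span {g}) _ _
            φ.toAlgebra b) := by
  intro a b
  have key : ∀ (u : Polynomial ℤ) (m n : ℕ), 0 < m → 0 < n →
      u * (X ^ m - 1) = X ^ n - 1 → u.Monic ∧ u.natDegree + m = n := by
    intro u m n hm hn h
    have hm' : (X ^ m - 1 : Polynomial ℤ).Monic := by
      simpa using monic_X_pow_sub_C (1 : ℤ) hm.ne'
    have hn' : (X ^ n - 1 : Polynomial ℤ).Monic := by
      simpa using monic_X_pow_sub_C (1 : ℤ) hn.ne'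
    have hu0 : u ≠ 0 := by
      rintro rfl
      rw [zero_mul] at h
      exact hn'.ne_zero h.symm
    have humonic : u.Monic := by
      have hlc : u.leadingCoeff * (X ^ m - 1 : Polynomial ℤ).leadingCoeff = 1 := by
        rw [← leadingCoeff_mul, h, hn'.leadingCoeff]
      rwa [hm'.leadingCoeff, mul_one] at hlc
    refine ⟨humonic, ?_⟩
    have hdm : (X ^ m - 1 : Polynomial ℤ).natDegree = m := by
      simpa using (natDegree_X_pow_sub_C (n := m) (r := (1 : ℤ)))
    have hdn : (X ^ n - 1 : Polynomial ℤ).natDegree = n := by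
      simpa using (natDegree_X_pow_sub_C (n := n) (r := (1 : ℤ)))
    have := natDegree_mul hu0 hm'.ne_zero
    rw [h, hdm, hdn] at this
    omega
  obtain ⟨hfm, hfd⟩ := key f (p ^ k) (p ^ (k + l)) (pow_pos hp.pos _) (pow_pos hp.pos _) hf
  obtain ⟨hgm, hgd⟩ := key g (p ^ (k + 1)) (p ^ (k + 1 + l)) (pow_pos hp.pos _)
    (pow_pos hp.pos _) hg
  have hdeg : g.natDegree = p * f.natDegree := by
    have e1 : p * f.natDegree + p ^ (k + 1) = p ^ (k + 1 + l) := by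
      calc p * f.natDegree + p ^ (k + 1) = p * (f.natDegree + p ^ k) := by ring
        _ = p * p ^ (k + l) := by rw [hfd]
        _ = p ^ (k + 1 + l) := by ring
    omega
  have hφ' : φ (AdjoinRoot.root f) = (AdjoinRoot.root g) ^ p := by
    have h1 : AdjoinRoot.root f = Ideal.Quotient.mk (Ideal.span {f}) X := rfl
    have h2 : (AdjoinRoot.root g) ^ p = Ideal.Quotient.mk (Ideal.span {g}) (X ^ p) := by
      rw [← AdjoinRoot.mk_X, ← map_pow]
      rfl
    rw [h1, h2]
    exact hφ
  exact main_aux p hp f g hfm hgm hdeg φ hφ' a b
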